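/- For rule 178, the value of the n-th iterated local rule depends on Bob's input y ∈ {0,1}^{n+1} only through the first bit of y and the length of the longest constant prefix of y. Precisely, for y ∈ {0,1}^{n+1} let ℓ(y) be the largest ℓ ≥ 1 with y_1 = y_2 = … = y_ℓ. If y, ỹ ∈ {0,1}^{n+1} satisfy y_1 = ỹ_1 and ℓ(y) = ℓ(ỹ), then f^n(x·y) = f^n(x·ỹ) for every x ∈ {0,1}^n. Consequently, the matrix M^n of rule 178 has at most 2(n+1) distinct columns. -/

import Mathlib

/-- The local rule of elementary cellular automaton 178. -/
def rule178 : Bool → Bool → Bool → Bool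
  | true,  true,  true  => true
  | true,  true,  false => false
  | true,  false, true  => true
  | true,  false, false => true
  | false, true,  true  => false
  | false, true,  false => false
  | false, false, true  => true
  | false, false, false => false

/-- One synchronous step of rule 178 on a finite word (sliding window of width 3);
the result is shorter by two cells. -/
def step178 : List Bool → List Bool
  | a :: b :: c :: l => rule178 a b c :: step178 (b :: c :: l)
  | _ => []

/-- The `n`-th iterated local rule of rule 178: on a word of length `2n+1` it
returns the single remaining cell after `n` steps. -/
def iter178 (n : ℕ) (z : List Bool) : Bool := (step178^[n] z).headD false

/-- Length of the longest constant prefix of a word. -/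
def constPrefix : List Bool → ℕ
  | [] => 0
  | [_] => 1
  | a :: b :: l => if a = b then constPrefix (b :: l) + 1 else 1

lemma step178_cons3 (a b c : Bool) (l : List Bool) :
    step178 (a :: b :: c :: l) = rule178 a b c :: step178 (b :: c :: l) := rfl

lemma step178_length : ∀ l : List Bool, (step178 l).length = l.length - 2
  | [] => rfl
  | [_] => rfl
  | [_, _] => rfl
  | a :: b :: c :: l => by
      rw [step178_cons3, List.length_cons, step178_length (b :: c :: l)]
      simp

lemma constPrefix_cons (h : Bool) (w : List Bool) :
    constPrefix (h :: w) =
      if w = [] then 1 else if h = w.headD false then constPrefix w + 1 else 1 := by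
  cases w with
  | nil => rfl
  | cons b t => simp [constPrefix]

lemma constPrefix_pos : ∀ l : List Bool, l ≠ [] → 1 ≤ constPrefix l := by
  intro l hl
  cases l with
  | nil => exact absurd rfl hl
  | cons a t => rw [constPrefix_cons]; split <;> [exact le_refl 1; split] <;> omega

lemma constPrefix_le_length : ∀ l : List Bool, constPrefix l ≤ l.length
  | [] => le_refl 0
  | [_] => le_refl 1
  | a :: b :: l => by
      show (if a = b then constPrefix (b :: l) + 1 else 1) ≤ (b :: l).length + 1
      have := constPrefix_le_length (b :: l)
      split <;> omega

lemma rule178_aux1 : ∀ a b : Bool, rule178 a b (!b) = !b := by decide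

lemma rule178_aux2 : ∀ b d : Bool, rule178 b (!b) d = b := by decide

/-- The key structural lemma: the head and the constant-prefix length of
`step178 (a :: y)` are determined by `a`, the head of `y`, `constPrefix y`
and the length of `y`. -/
lemma keyK : ∀ y ytilde : List Bool, y.length = ytilde.length →
    y.headD false = ytilde.headD false → constPrefix y = constPrefix ytilde →
    ∀ a : Bool,
      (step178 (a :: y)).headD false = (step178 (a :: ytilde)).headD false ∧
      constPrefix (step178 (a :: y)) = constPrefix (step178 (a :: ytilde)) := by
  intro y
  induction y with
  | nil =>
    intro yt hl _ _ a
    rw [List.length_nil] at hl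
    rw [(List.length_eq_zero_iff.mp hl.symm : yt = [])]
    exact ⟨rfl, rfl⟩
  | cons b t ih =>
    intro yt hl hh hcp a
    obtain ⟨b', t', rfl⟩ : ∃ b' t', yt = b' :: t' := by
      cases yt with
      | nil => simp at hl
      | cons b' t' => exact ⟨b', t', rfl⟩
    have hb : b = b' := by simpa using hh
    subst hb
    have hl1 : t.length = t'.length := by simpa using hl
    cases t with
    | nil =>
      have : t' = [] := List.length_eq_zero_iff.mp hl1.symm
      subst this; exact ⟨rfl, rfl⟩
    | cons c t2 =>
      obtain ⟨c', t2', rfl⟩ : ∃ c' t2', t' = c' :: t2' := by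
        cases t' with
        | nil => simp at hl1
        | cons c' t2' => exact ⟨c', t2', rfl⟩
      have hl2 : t2.length = t2'.length := by simpa using hl1
      cases t2 with
      | nil =>
        have : t2' = [] := List.length_eq_zero_iff.mp hl2.symm
        subst this
        have : c' = c := by
          revert hcp; cases b <;> cases c <;> cases c' <;> decide
        subst this; exact ⟨rfl, rfl⟩
      | cons d t3 =>
        obtain ⟨d', t3', rfl⟩ : ∃ d' t3', t2' = d' :: t3' := by
          cases t2' with
          | nil => simp at hl2
          | cons d' t3' => exact ⟨d', t3', rfl⟩
        have hl3 : t3.length = t3'.length := by simpa using hl2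
        by_cases hbc : b = c
        · -- constant prefix at least 2; peel one cell and recurse
          have hbc' : b = c' := by
            by_contra hne
            have hnot : ¬ (b = c') := hne
            have h1 : constPrefix (b :: c' :: d' :: t3') = 1 := by
              simp [constPrefix, hnot]
            have h2 : constPrefix (b :: c :: d :: t3) =
                constPrefix (c :: d :: t3) + 1 := by simp [constPrefix, hbc]
            have := constPrefix_pos (c :: d :: t3) (by simp)
            omega
          subst hbc; subst hbc'
          have hcp' : constPrefix (b :: d :: t3) = constPrefix (b :: d' :: t3') := by
            have h2 : constPrefix (b :: b :: d :: t3) =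
                constPrefix (b :: d :: t3) + 1 := by simp [constPrefix]
            have h3 : constPrefix (b :: b :: d' :: t3') =
                constPrefix (b :: d' :: t3') + 1 := by simp [constPrefix]
            omega
          obtain ⟨hH, hC⟩ := ih (b :: d' :: t3') (by simpa using hl1) rfl hcp' b
          have L1 : step178 (a :: b :: b :: d :: t3)
              = rule178 a b b :: step178 (b :: b :: d :: t3) := rfl
          have L2 : step178 (a :: b :: b :: d' :: t3')
              = rule178 a b b :: step178 (b :: b :: d' :: t3') := rfl
          rw [L1, L2]
          constructor
          · simp
          · have hlen : (step178 (b :: b :: d :: t3)).length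
                = (step178 (b :: b :: d' :: t3')).length := by
              rw [step178_length, step178_length]; simp [hl3]
            rw [constPrefix_cons, constPrefix_cons]
            by_cases hw : step178 (b :: b :: d :: t3) = []
            · have hw' : step178 (b :: b :: d' :: t3') = [] := by
                rw [← List.length_eq_zero_iff, ← hlen, List.length_eq_zero_iff]; exact hw
              simp [hw, hw']
            · have hw' : step178 (b :: b :: d' :: t3') ≠ [] := by
                rw [← List.length_eq_zero_iff.ne, ← hlen, List.length_eq_zero_iff.ne]
                exact hw
              simp only [hw, hw', if_false, hH, hC]
        · -- prefix length 1: both second letters are !b, output starts ¬b, b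
          have hc : c = !b := by cases b <;> cases c <;> simp_all
          have hbc' : b ≠ c' := by
            intro hbe
            have h1 : constPrefix (b :: c :: d :: t3) = 1 := by
              simp [constPrefix, hbc]
            have h2 : constPrefix (b :: c' :: d' :: t3') =
                constPrefix (c' :: d' :: t3') + 1 := by simp [constPrefix, hbe]
            have := constPrefix_pos (c' :: d' :: t3') (by simp)
            omega
          have hc' : c' = !b := by cases b <;> cases c' <;> simp_all
          subst hc; subst hc'
          have E1 : step178 (a :: b :: (!b) :: d :: t3)
              = (!b) :: b :: step178 ((!b) :: d :: t3) := by
            have : step178 (a :: b :: (!b) :: d :: t3)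
                = rule178 a b (!b) :: rule178 b (!b) d :: step178 ((!b) :: d :: t3) := rfl
            rw [this, rule178_aux1, rule178_aux2]
          have E2 : step178 (a :: b :: (!b) :: d' :: t3')
              = (!b) :: b :: step178 ((!b) :: d' :: t3') := by
            have : step178 (a :: b :: (!b) :: d' :: t3')
                = rule178 a b (!b) :: rule178 b (!b) d' :: step178 ((!b) :: d' :: t3') := rfl
            rw [this, rule178_aux1, rule178_aux2]
          rw [E1, E2]
          have hcp1 : ∀ w : List Bool, constPrefix ((!b) :: b :: w) = 1 := by
            intro w; cases b <;> simp [constPrefix]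
          exact ⟨rfl, by rw [hcp1, hcp1]⟩

lemma step178_append : ∀ (u : List Bool) (b c : Bool) (v : List Bool),
    step178 (u ++ b :: c :: v) = step178 (u ++ [b, c]) ++ step178 (b :: c :: v) := by
  intro u
  induction u with
  | nil => intro b c v; simp [step178]
  | cons x u ih =>
    intro b c v
    cases u with
    | nil => simp [step178_cons3, step178]
    | cons z u' =>
      have hne : ∀ w : List Bool, (u' ++ b :: c :: w).headD false
          = (u' ++ [b, c]).headD false := by
        intro w; cases u' <;> simp
      obtain ⟨w, r, hwr⟩ : ∃ w r, u' ++ b :: c :: v = w :: r := by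
        cases u' with
        | nil => exact ⟨b, c :: v, rfl⟩
        | cons p q => exact ⟨p, q ++ b :: c :: v, rfl⟩
      obtain ⟨w2, r2, hwr2⟩ : ∃ w2 r2, u' ++ [b, c] = w2 :: r2 := by
        cases u' with
        | nil => exact ⟨b, [c], rfl⟩
        | cons p q => exact ⟨p, q ++ [b, c], rfl⟩
      have hww : w = w2 := by
        have := hne v
        rw [hwr, hwr2] at this; simpa using this
      subst hww
      have e1 : (x :: z :: u') ++ b :: c :: v = x :: z :: w :: r := by
        simp [hwr]
      have e2 : (x :: z :: u') ++ [b, c] = x :: z :: w :: r2 := by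
        simp [hwr2]
      rw [e1, e2, step178_cons3, step178_cons3]
      have g1 : z :: w :: r = (z :: u') ++ b :: c :: v := by simp [hwr]
      have g2 : z :: w :: r2 = (z :: u') ++ [b, c] := by simp [hwr2]
      rw [g1, g2, ih b c v]
      simp

lemma iter178_succ (n : ℕ) (z : List Bool) :
    iter178 (n + 1) z = iter178 n (step178 z) := by
  simp [iter178, Function.iterate_succ_apply]

/-- Main lemma: the iterated rule depends on `y` only through its head and
constant-prefix length. -/
lemma main178 : ∀ n : ℕ, ∀ y ytilde : List Bool, y.length = n + 1 →
    ytilde.length = n + 1 →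
    y.headD false = ytilde.headD false → constPrefix y = constPrefix ytilde →
    ∀ x : List Bool, x.length = n → iter178 n (x ++ y) = iter178 n (x ++ ytilde) := by
  intro n
  induction n with
  | zero =>
    intro y yt _ _ hh _ x hx
    have : x = [] := List.length_eq_zero_iff.mp hx
    subst this
    simpa [iter178] using hh
  | succ n ih =>
    intro y yt hy hyt hh hcp x hx
    obtain ⟨x₀, a, rfl⟩ : ∃ x₀ a, x = x₀ ++ [a] := by
      rcases List.eq_nil_or_concat x with h | ⟨x₀, a, h⟩
      · subst h; simp at hx
      · exact ⟨x₀, a, by simpa using h⟩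
    obtain ⟨b, t, rfl⟩ : ∃ b t, y = b :: t := by
      cases y with
      | nil => simp at hy
      | cons b t => exact ⟨b, t, rfl⟩
    obtain ⟨b', t', rfl⟩ : ∃ b' t', yt = b' :: t' := by
      cases yt with
      | nil => simp at hyt
      | cons b' t' => exact ⟨b', t', rfl⟩
    have hb : b = b' := by simpa using hh
    subst hb
    have hx₀ : x₀.length = n := by simpa using hx
    have e1 : (x₀ ++ [a]) ++ b :: t = x₀ ++ a :: b :: t := by simp
    have e2 : (x₀ ++ [a]) ++ b :: t' = x₀ ++ a :: b :: t' := by simp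
    rw [e1, e2, iter178_succ, iter178_succ, step178_append x₀ a b t,
      step178_append x₀ a b t']
    obtain ⟨hH, hC⟩ := keyK (b :: t) (b :: t') (by omega) rfl hcp a
    exact ih _ _ (by rw [step178_length]; simpa using hy)
      (by rw [step178_length]; simpa using hyt) hH hC _
      (by rw [step178_length]; simp [hx₀])

lemma constPrefix_replicate : ∀ (m : ℕ) (b : Bool),
    constPrefix (List.replicate m b) = m
  | 0, _ => rfl
  | 1, _ => rfl
  | (m + 2), b => by
      have h : List.replicate (m + 2) b = b :: b :: List.replicate m b := by
        simp [List.replicate_succ]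
      rw [h]
      have h2 : constPrefix (b :: b :: List.replicate m b)
          = constPrefix (b :: List.replicate m b) + 1 := by simp [constPrefix]
      have h3 : b :: List.replicate m b = List.replicate (m + 1) b := by
        simp [List.replicate_succ]
      rw [h2, h3, constPrefix_replicate (m + 1) b]

lemma constPrefix_replicate_append : ∀ (m : ℕ) (b : Bool) (r : List Bool), 1 ≤ m →
    constPrefix (List.replicate m b ++ (!b) :: r) = m
  | 0, _, _, h => by omega
  | 1, b, r, _ => by simp [constPrefix]
  | (m + 2), b, r, _ => by
      have h : List.replicate (m + 2) b ++ (!b) :: r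
          = b :: (List.replicate (m + 1) b ++ (!b) :: r) := by
        simp [List.replicate_succ]
      rw [h, constPrefix_cons]
      have hne : List.replicate (m + 1) b ++ (!b) :: r ≠ [] := by simp
      have hhd : (List.replicate (m + 1) b ++ (!b) :: r).headD false = b := by
        simp [List.replicate_succ]
      rw [if_neg hne, hhd, if_pos rfl,
        constPrefix_replicate_append (m + 1) b r (by omega)]

theorem rule178_column_structure (n : ℕ) (hn : 1 ≤ n) :
    (∀ y ytilde : List Bool, y.length = n + 1 → ytilde.length = n + 1 →
      y.headD false = ytilde.headD false → constPrefix y = constPrefix ytilde →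
      ∀ x : List Bool, x.length = n → iter178 n (x ++ y) = iter178 n (x ++ ytilde)) ∧
    Set.ncard { g : {x : List Bool // x.length = n} → Bool |
        ∃ y : List Bool, y.length = n + 1 ∧ g = fun x => iter178 n (x.1 ++ y) }
      ≤ 2 * (n + 1) := by
  refine ⟨main178 n, ?_⟩
  set F : Bool × Fin (n + 1) → ({x : List Bool // x.length = n} → Bool) :=
    fun p x => iter178 n
      (x.1 ++ (List.replicate (p.2.1 + 1) p.1 ++ List.replicate (n - p.2.1) (!p.1)))
    with hF
  have hsub : { g : {x : List Bool // x.length = n} → Bool |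
      ∃ y : List Bool, y.length = n + 1 ∧ g = fun x => iter178 n (x.1 ++ y) }
      ⊆ Set.range F := by
    rintro g ⟨y, hy, rfl⟩
    have hyne : y ≠ [] := by intro h; rw [h] at hy; simp at hy
    have hcp1 : 1 ≤ constPrefix y := constPrefix_pos y hyne
    have hcp2 : constPrefix y ≤ n + 1 := hy ▸ constPrefix_le_length y
    refine ⟨(y.headD false, ⟨constPrefix y - 1, by omega⟩), ?_⟩
    set b := y.headD false
    set ℓ := constPrefix y
    set z : List Bool := List.replicate (ℓ - 1 + 1) b ++ List.replicate (n - (ℓ - 1)) (!b)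
      with hz
    have hℓ : ℓ - 1 + 1 = ℓ := by omega
    have hzlen : z.length = n + 1 := by simp [hz]; omega
    have hzhd : z.headD false = b := by
      rw [hz, hℓ]
      cases hℓ' : ℓ with
      | zero => omega
      | succ k => simp [List.replicate_succ]
    have hzcp : constPrefix z = ℓ := by
      rw [hz, hℓ]
      cases hnl : n - (ℓ - 1) with
      | zero => simp [constPrefix_replicate]
      | succ k =>
        rw [List.replicate_succ]
        exact constPrefix_replicate_append ℓ b _ hcp1
    funext x
    show iter178 n (x.1 ++ z) = iter178 n (x.1 ++ y)
    exact main178 n z y hzlen hy hzhd hzcp x.1 x.2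
  calc Set.ncard { g : {x : List Bool // x.length = n} → Bool |
        ∃ y : List Bool, y.length = n + 1 ∧ g = fun x => iter178 n (x.1 ++ y) }
      ≤ (Set.range F).ncard := Set.ncard_le_ncard hsub (Set.finite_range F)
    _ ≤ 2 * (n + 1) := by
        rw [← Set.image_univ]
        refine le_trans (Set.ncard_image_le Set.finite_univ) ?_
        rw [Set.ncard_univ, Nat.card_eq_fintype_card]
        simp [Fintype.card_prod]
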